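/- (Swap-regret bound.) Let Λ := Δ^{m̃} be the m̃-dimensional probability simplex, ℳ the set of left-stochastic m̃×m̃ matrices, and f₁,…,f_T : Λ → ℝ concave. Starting from M^(1) with all entries 1/m̃ and with step size η := √(m̃ ln m̃/(T B_ĝ²)), perform T iterations: λ^(t) := a stationary distribution of M^(t) (so M^(t) λ^(t) = λ^(t)); A^(t) := ĝ_t (λ^(t))ᵀ, where ĝ_t is a supergradient of f_t at λ^(t) with ‖ĝ_t‖_∞ ≤ B_ĝ; M̃^(t+1) = M^(t) ⊙ exp(η A^(t)) element-wise; and M^(t+1) is M̃^(t+1) with each column normalized to sum to 1. Then for every M* ∈ ℳ: (1/T) Σ_{t=1}^T f_t(M* λ^(t)) − (1/T) Σ_{t=1}^T f_t(λ^(t)) ≤ 2 B_ĝ √(m̃ ln m̃ / T). -/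

import Mathlib

private lemma exp_le_quad {x : ℝ} (h : |x| ≤ 1) : Real.exp x ≤ 1 + x + x ^ 2 := by
  have h2 := Real.exp_bound h (by norm_num : 0 < 2)
  have hsum : ∑ i ∈ Finset.range 2, x ^ i / (Nat.factorial i) = 1 + x := by
    simp [Finset.sum_range_succ]
  rw [hsum] at h2
  have habs : |x| ^ 2 = x ^ 2 := sq_abs x
  have h3 := abs_le.mp h2
  norm_num [habs] at h3
  nlinarith [sq_nonneg x]


set_option maxHeartbeats 2000000



/-- **Swap-regret bound** (Lemma C.9).  Let `Λ = Δ^{m̃}` and `f₁, …, f_T` be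
concave on `Λ` with supergradients bounded by `B_ĝ` in `∞`-norm.  At each step
the player plays a stationary distribution `λ^(t)` of the left-stochastic
matrix `M^(t)`, and updates `M` multiplicatively using the rank-one matrix
`A^(t) = ĝ_t (λ^(t))ᵀ`, followed by column normalization, with step size
`η = √(m̃ ln m̃ / (T B_ĝ²))`.  Then for every left-stochastic `M*`,
`(1/T) ∑ₜ fₜ(M* λ^(t)) − (1/T) ∑ₜ fₜ(λ^(t)) ≤ 2 B_ĝ √(m̃ ln m̃ / T)`. -/
theorem swap_regret_bound
    {mt : ℕ} (T : ℕ) (hT : 0 < T) (Bg : ℝ)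
    (f : ℕ → (Fin mt → ℝ) → ℝ)
    (hconc : ∀ t, ConcaveOn ℝ (stdSimplex ℝ (Fin mt)) (f t))
    (η : ℝ) (hη : η = Real.sqrt ((mt : ℝ) * Real.log mt / (T * Bg ^ 2)))
    (lams : ℕ → Fin mt → ℝ)
    (gs : ℕ → Fin mt → ℝ)
    (Ms : ℕ → Fin mt → Fin mt → ℝ)
    (hinit : ∀ i j, Ms 0 i j = 1 / (mt : ℝ))
    -- `λ^(t)` is a stationary distribution of `M^(t)`
    (hstat : ∀ t < T, lams t ∈ stdSimplex ℝ (Fin mt) ∧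
      ∀ i, ∑ j, Ms t i j * lams t j = lams t i)
    -- `ĝ_t` is a supergradient of `f_t` at `λ^(t)`
    (hsuper : ∀ t < T, ∀ y ∈ stdSimplex ℝ (Fin mt),
      f t y ≤ f t (lams t) + ∑ i, gs t i * (y i - lams t i))
    -- `∞`-norm bound on the supergradients
    (hgb : ∀ t < T, ∀ i, |gs t i| ≤ Bg)
    -- multiplicative update with `A^(t) = ĝ_t (λ^(t))ᵀ`, then column
    -- normalization
    (hupdate : ∀ t < T, ∀ i j,
      Ms (t + 1) i j = (Ms t i j * Real.exp (η * (gs t i * lams t j)))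
        / ∑ k, Ms t k j * Real.exp (η * (gs t k * lams t j))) :
    ∀ M' : Fin mt → Fin mt → ℝ,
      (∀ j, (fun i => M' i j) ∈ stdSimplex ℝ (Fin mt)) →
      (1 / (T : ℝ)) * ∑ t ∈ Finset.range T, f t (fun i => ∑ j, M' i j * lams t j)
        - (1 / (T : ℝ)) * ∑ t ∈ Finset.range T, f t (lams t)
      ≤ 2 * Bg * Real.sqrt ((mt : ℝ) * Real.log mt / T) := by
  intro M' hM'
  -- mt is positive
  have hmt : 0 < mt := by
    by_contra h
    have h0 : mt = 0 := by omega
    have := (hstat 0 hT).1.2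
    subst h0
    simp at this
  have hmtR : (0:ℝ) < mt := by exact_mod_cast hmt
  have hTR : (0:ℝ) < T := by exact_mod_cast hT
  -- simplex facts for lams
  have hl0 : ∀ t < T, ∀ j, 0 ≤ lams t j := fun t ht => (hstat t ht).1.1
  have hl1 : ∀ t < T, ∑ j, lams t j = 1 := fun t ht => (hstat t ht).1.2
  have hlle1 : ∀ t < T, ∀ j, lams t j ≤ 1 := by
    intro t ht j
    calc lams t j ≤ ∑ k, lams t k :=
          Finset.single_le_sum (fun k _ => hl0 t ht k) (Finset.mem_univ j)
      _ = 1 := hl1 t ht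
  -- Bg nonneg
  have hBg0 : 0 ≤ Bg := le_trans (abs_nonneg _) (hgb 0 hT ⟨0, hmt⟩)
  have hne : (Finset.univ : Finset (Fin mt)).Nonempty := ⟨⟨0, hmt⟩, Finset.mem_univ _⟩
  -- images under M' stay in the simplex
  have hMim : ∀ t < T, (fun i => ∑ j, M' i j * lams t j) ∈ stdSimplex ℝ (Fin mt) := by
    intro t ht
    constructor
    · intro i
      exact Finset.sum_nonneg fun j _ => mul_nonneg ((hM' j).1 i) (hl0 t ht j)
    · rw [Finset.sum_comm]
      have : ∀ j, ∑ i, M' i j * lams t j = lams t j := by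
        intro j
        rw [← Finset.sum_mul, (hM' j).2, one_mul]
      simp only [this, hl1 t ht]
  -- supergradient step: pointwise bound by the linear quantity D t
  set D : ℕ → ℝ := fun t => ∑ i, ∑ j, (M' i j - Ms t i j) * (gs t i * lams t j) with hD
  have hstep : ∀ t < T,
      f t (fun i => ∑ j, M' i j * lams t j) - f t (lams t) ≤ D t := by
    intro t ht
    have h1 := hsuper t ht _ (hMim t ht)
    have h2 : ∑ i, gs t i * ((∑ j, M' i j * lams t j) - lams t i) = D t := by
      rw [hD]
      apply Finset.sum_congr rfl
      intro i _
      rw [← (hstat t ht).2 i, ← Finset.sum_sub_distrib, Finset.mul_sum]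
      apply Finset.sum_congr rfl
      intro j _
      ring
    linarith [h1, h2.ge]
  have hmain : (1 / (T : ℝ)) * ∑ t ∈ Finset.range T, f t (fun i => ∑ j, M' i j * lams t j)
        - (1 / (T : ℝ)) * ∑ t ∈ Finset.range T, f t (lams t)
      ≤ (1 / (T : ℝ)) * ∑ t ∈ Finset.range T, D t := by
    rw [← mul_sub, ← Finset.sum_sub_distrib]
    apply mul_le_mul_of_nonneg_left _ (by positivity)
    exact Finset.sum_le_sum fun t ht => hstep t (Finset.mem_range.mp ht)
  -- bound on |⟨g, x⟩| for x in the simplex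
  have hip : ∀ t < T, ∀ x ∈ stdSimplex ℝ (Fin mt), |∑ i, gs t i * x i| ≤ Bg := by
    intro t ht x hx
    calc |∑ i, gs t i * x i| ≤ ∑ i, |gs t i * x i| := Finset.abs_sum_le_sum_abs _ _
      _ ≤ ∑ i, Bg * x i := by
          apply Finset.sum_le_sum
          intro i _
          rw [abs_mul, abs_of_nonneg (hx.1 i)]
          exact mul_le_mul_of_nonneg_right (hgb t ht i) (hx.1 i)
      _ = Bg := by rw [← Finset.mul_sum, hx.2, mul_one]
  -- crude bound D t ≤ 2 Bg
  have hDle : ∀ t < T, D t ≤ 2 * Bg := by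
    intro t ht
    have e1 : D t = (∑ i, gs t i * ∑ j, M' i j * lams t j) - ∑ i, gs t i * lams t i := by
      have h2 : ∑ i, gs t i * ((∑ j, M' i j * lams t j) - lams t i) = D t := by
        rw [hD]
        apply Finset.sum_congr rfl
        intro i _
        rw [← (hstat t ht).2 i, ← Finset.sum_sub_distrib, Finset.mul_sum]
        apply Finset.sum_congr rfl
        intro j _
        ring
      rw [← h2, ← Finset.sum_sub_distrib]
      apply Finset.sum_congr rfl
      intro i _
      ring
    have b1 := abs_le.mp (hip t ht _ (hMim t ht))
    have b2 := abs_le.mp (hip t ht _ (hstat t ht).1)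
    linarith [e1.le, e1.ge]
  by_cases hcase : 1 ≤ Real.sqrt ((mt : ℝ) * Real.log mt / T)
  · -- trivial case: the bound exceeds 2 Bg
    have : (1 / (T : ℝ)) * ∑ t ∈ Finset.range T, D t ≤ 2 * Bg := by
      calc (1 / (T : ℝ)) * ∑ t ∈ Finset.range T, D t
          ≤ (1 / (T : ℝ)) * ∑ t ∈ Finset.range T, (2 * Bg) := by
            apply mul_le_mul_of_nonneg_left _ (by positivity)
            exact Finset.sum_le_sum fun t ht => hDle t (Finset.mem_range.mp ht)
        _ = 2 * Bg := by
            rw [Finset.sum_const, Finset.card_range, nsmul_eq_mul]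
            field_simp
    calc _ ≤ (1 / (T : ℝ)) * ∑ t ∈ Finset.range T, D t := hmain
      _ ≤ 2 * Bg := this
      _ ≤ 2 * Bg * Real.sqrt ((mt : ℝ) * Real.log mt / T) := by
          nlinarith [hcase, hBg0]
  · push_neg at hcase
    -- now √(mt log mt / T) < 1
    by_cases hBg : Bg = 0
    · -- all gradients vanish; D t ≤ 0
      have hle : (1 / (T : ℝ)) * ∑ t ∈ Finset.range T, D t ≤ 0 := by
        apply mul_nonpos_of_nonneg_of_nonpos (by positivity)
        apply Finset.sum_nonpos
        intro t ht
        have := hDle t (Finset.mem_range.mp ht)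
        simpa [hBg] using this
      have hrhs : 0 ≤ 2 * Bg * Real.sqrt ((mt : ℝ) * Real.log mt / T) := by
        apply mul_nonneg (by linarith) (Real.sqrt_nonneg _)
      linarith [hmain]
    have hBgpos : 0 < Bg := lt_of_le_of_ne hBg0 (Ne.symm hBg)
    by_cases hmt1 : mt = 1
    · -- mt = 1 : everything is trivial since λ ≡ 1 and M' ≡ 1
      subst hmt1
      have hrhs : 0 ≤ 2 * Bg * Real.sqrt ((1 : ℝ) * Real.log 1 / T) := by
        apply mul_nonneg (by linarith) (Real.sqrt_nonneg _)
      have heq : ∀ t < T, (fun i : Fin 1 => ∑ j, M' i j * lams t j) = lams t := by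
        intro t ht
        funext i
        have hM1 : M' i i = 1 := by
          have := (hM' i).2
          simpa [Fin.sum_univ_one, Fin.fin_one_eq_zero i] using this
        have : ∑ j : Fin 1, M' i j * lams t j = M' i i * lams t i := by
          rw [Fin.sum_univ_one]
          congr 1 <;> exact congrArg _ (Subsingleton.elim _ _)
        rw [this, hM1, one_mul]
      have : ∑ t ∈ Finset.range T, f t (fun i => ∑ j, M' i j * lams t j)
          = ∑ t ∈ Finset.range T, f t (lams t) := by
        apply Finset.sum_congr rfl
        intro t ht
        rw [heq t (Finset.mem_range.mp ht)]
      rw [this]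
      simpa using hrhs
    have hmt2 : 2 ≤ mt := by omega
    have hlogpos : 0 < Real.log mt := Real.log_pos (by exact_mod_cast hmt2)
    have hLpos : (0:ℝ) < (mt : ℝ) * Real.log mt := mul_pos hmtR hlogpos
    have hηpos : 0 < η := by
      rw [hη]
      apply Real.sqrt_pos.mpr
      positivity
    -- η * Bg = √(mt log mt / T)
    have hηBg : η * Bg = Real.sqrt ((mt : ℝ) * Real.log mt / T) := by
      rw [hη]
      rw [show (mt : ℝ) * Real.log mt / (T * Bg ^ 2)
            = ((mt : ℝ) * Real.log mt / T) * (1 / Bg) ^ 2 by field_simp]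
      rw [Real.sqrt_mul (by positivity), Real.sqrt_sq (by positivity)]
      field_simp
    have hηBg1 : η * Bg ≤ 1 := by rw [hηBg]; exact hcase.le
    -- matrix invariants: positivity and column sums
    have hMinv : ∀ t, t ≤ T → (∀ i j, 0 < Ms t i j) ∧ (∀ j, ∑ i, Ms t i j = 1) := by
      intro t
      induction t with
      | zero =>
        intro _
        constructor
        · intro i j; rw [hinit]; positivity
        · intro j
          simp only [hinit]
          rw [Finset.sum_const, Finset.card_univ, Fintype.card_fin, nsmul_eq_mul]
          field_simp
      | succ n ih =>
        intro ht
        have hnT : n < T := by omega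
        obtain ⟨hpos, hsum⟩ := ih (by omega)
        have hZpos : ∀ j, 0 < ∑ k, Ms n k j * Real.exp (η * (gs n k * lams n j)) := by
          intro j
          apply Finset.sum_pos
          · intro k _
            exact mul_pos (hpos k j) (Real.exp_pos _)
          · exact hne
        constructor
        · intro i j
          rw [hupdate n hnT]
          exact div_pos (mul_pos (hpos i j) (Real.exp_pos _)) (hZpos j)
        · intro j
          have : ∀ i, Ms (n+1) i j = (Ms n i j * Real.exp (η * (gs n i * lams n j)))
              / ∑ k, Ms n k j * Real.exp (η * (gs n k * lams n j)) := fun i => hupdate n hnT i j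
          simp only [this]
          rw [← Finset.sum_div]
          exact div_self (ne_of_gt (hZpos j))
    -- log evolution of Ms
    have hZpos : ∀ t < T, ∀ j, 0 < ∑ k, Ms t k j * Real.exp (η * (gs t k * lams t j)) := by
      intro t ht j
      apply Finset.sum_pos
      · intro k _
        exact mul_pos ((hMinv t ht.le).1 k j) (Real.exp_pos _)
      · exact hne
    have hlogev : ∀ t ≤ T, ∀ i j, Real.log (Ms t i j)
        = Real.log (1 / mt) + ∑ s ∈ Finset.range t,
          (η * (gs s i * lams s j) - Real.log (∑ k, Ms s k j * Real.exp (η * (gs s k * lams s j)))) := by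
      intro t
      induction t with
      | zero => intro _ i j; simp [hinit]
      | succ n ih =>
        intro ht i j
        have hnT : n < T := by omega
        have hMpos := (hMinv n hnT.le).1 i j
        rw [hupdate n hnT i j, Real.log_div (by positivity) (ne_of_gt (hZpos n hnT j)),
          Real.log_mul (ne_of_gt hMpos) (ne_of_gt (Real.exp_pos _)), Real.log_exp,
          ih (by omega) i j, Finset.sum_range_succ]
        ring
    -- bound |η * a| ≤ 1
    have hηa : ∀ t < T, ∀ i j, |η * (gs t i * lams t j)| ≤ 1 := by
      intro t ht i j
      rw [abs_mul, abs_of_nonneg hηpos.le, abs_mul, abs_of_nonneg (hl0 t ht j)]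
      calc η * (|gs t i| * lams t j) ≤ η * (Bg * 1) := by
            apply mul_le_mul_of_nonneg_left _ hηpos.le
            exact mul_le_mul (hgb t ht i) (hlle1 t ht j) (hl0 t ht j) hBg0
        _ ≤ 1 := by rw [mul_one]; exact hηBg1
    -- second-order bound on log of the normalizer
    have hlogZ : ∀ t < T, ∀ j,
        Real.log (∑ k, Ms t k j * Real.exp (η * (gs t k * lams t j)))
        ≤ η * (∑ k, Ms t k j * (gs t k * lams t j)) + η^2 * Bg^2 * (lams t j)^2 := by
      intro t ht j
      have hMt := hMinv t ht.le
      have hZle : (∑ k, Ms t k j * Real.exp (η * (gs t k * lams t j)))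
          ≤ 1 + η * (∑ k, Ms t k j * (gs t k * lams t j)) + η^2 * Bg^2 * (lams t j)^2 := by
        calc (∑ k, Ms t k j * Real.exp (η * (gs t k * lams t j)))
            ≤ ∑ k, Ms t k j * (1 + η * (gs t k * lams t j) + (η * (gs t k * lams t j))^2) := by
              apply Finset.sum_le_sum
              intro k _
              exact mul_le_mul_of_nonneg_left (exp_le_quad (hηa t ht k j)) (hMt.1 k j).le
          _ ≤ 1 + η * (∑ k, Ms t k j * (gs t k * lams t j)) + η^2 * Bg^2 * (lams t j)^2 := by
              have e : ∑ k, Ms t k j * (1 + η * (gs t k * lams t j) + (η * (gs t k * lams t j))^2)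
                  = (∑ k, Ms t k j) + η * (∑ k, Ms t k j * (gs t k * lams t j))
                    + ∑ k, Ms t k j * (η * (gs t k * lams t j))^2 := by
                rw [Finset.mul_sum, ← Finset.sum_add_distrib, ← Finset.sum_add_distrib]
                apply Finset.sum_congr rfl
                intro k _
                ring
              rw [e, hMt.2 j]
              have hsq : ∑ k, Ms t k j * (η * (gs t k * lams t j))^2
                  ≤ η^2 * Bg^2 * (lams t j)^2 := by
                calc ∑ k, Ms t k j * (η * (gs t k * lams t j))^2
                    ≤ ∑ k, Ms t k j * (η^2 * Bg^2 * (lams t j)^2) := by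
                      apply Finset.sum_le_sum
                      intro k _
                      apply mul_le_mul_of_nonneg_left _ (hMt.1 k j).le
                      have hg2 : (gs t k)^2 ≤ Bg^2 := by
                        have h := hgb t ht k
                        nlinarith [abs_nonneg (gs t k), sq_abs (gs t k)]
                      nlinarith [hg2, mul_nonneg (sq_nonneg η) (sq_nonneg (lams t j))]
                  _ = η^2 * Bg^2 * (lams t j)^2 := by
                      rw [← Finset.sum_mul, hMt.2 j, one_mul]
              linarith
      calc Real.log (∑ k, Ms t k j * Real.exp (η * (gs t k * lams t j)))
          ≤ Real.log (1 + η * (∑ k, Ms t k j * (gs t k * lams t j))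
              + η^2 * Bg^2 * (lams t j)^2) :=
            Real.log_le_log (hZpos t ht j) hZle
        _ ≤ η * (∑ k, Ms t k j * (gs t k * lams t j)) + η^2 * Bg^2 * (lams t j)^2 := by
            have hpos : 0 < 1 + η * (∑ k, Ms t k j * (gs t k * lams t j))
                + η^2 * Bg^2 * (lams t j)^2 := lt_of_lt_of_le (hZpos t ht j) hZle
            linarith [Real.log_le_sub_one_of_pos hpos]
    -- per (i, j) regret bound from the telescoped log
    have hkey : ∀ i j, ∑ t ∈ Finset.range T, η * (gs t i * lams t j)
        ≤ Real.log mt + ∑ t ∈ Finset.range T,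
          (η * (∑ k, Ms t k j * (gs t k * lams t j)) + η^2 * Bg^2 * (lams t j)^2) := by
      intro i j
      have hT1 : Real.log (Ms T i j) ≤ 0 := by
        apply Real.log_nonpos ((hMinv T le_rfl).1 i j).le
        calc Ms T i j ≤ ∑ k, Ms T k j :=
              Finset.single_le_sum (fun k _ => ((hMinv T le_rfl).1 k j).le) (Finset.mem_univ i)
          _ = 1 := (hMinv T le_rfl).2 j
      have hev := hlogev T le_rfl i j
      have hlog1m : Real.log (1 / (mt:ℝ)) = - Real.log mt := by
        rw [one_div, Real.log_inv]
      rw [hev, hlog1m, Finset.sum_sub_distrib] at hT1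
      have hZsum : ∑ t ∈ Finset.range T,
            Real.log (∑ k, Ms t k j * Real.exp (η * (gs t k * lams t j)))
          ≤ ∑ t ∈ Finset.range T,
            (η * (∑ k, Ms t k j * (gs t k * lams t j)) + η^2 * Bg^2 * (lams t j)^2) :=
        Finset.sum_le_sum fun t ht => hlogZ t (Finset.mem_range.mp ht) j
      linarith
    -- per-column bound, weighted by the column of M'
    have hcol : ∀ j, η * (∑ t ∈ Finset.range T, ∑ i, (M' i j - Ms t i j) * (gs t i * lams t j))
        ≤ Real.log mt + η^2 * Bg^2 * ∑ t ∈ Finset.range T, (lams t j)^2 := by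
      intro j
      have h1 : ∑ i, M' i j * (∑ t ∈ Finset.range T, η * (gs t i * lams t j))
          ≤ ∑ i, M' i j * (Real.log mt + ∑ t ∈ Finset.range T,
            (η * (∑ k, Ms t k j * (gs t k * lams t j)) + η^2 * Bg^2 * (lams t j)^2)) :=
        Finset.sum_le_sum fun i _ => mul_le_mul_of_nonneg_left (hkey i j) ((hM' j).1 i)
      have h2 : ∑ i, M' i j * (Real.log mt + ∑ t ∈ Finset.range T,
            (η * (∑ k, Ms t k j * (gs t k * lams t j)) + η^2 * Bg^2 * (lams t j)^2))
          = Real.log mt + ∑ t ∈ Finset.range T,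
            (η * (∑ k, Ms t k j * (gs t k * lams t j)) + η^2 * Bg^2 * (lams t j)^2) := by
        rw [← Finset.sum_mul, (hM' j).2, one_mul]
      have h3 : ∑ i, M' i j * (∑ t ∈ Finset.range T, η * (gs t i * lams t j))
          = η * ∑ t ∈ Finset.range T, ∑ i, M' i j * (gs t i * lams t j) := by
        calc ∑ i, M' i j * (∑ t ∈ Finset.range T, η * (gs t i * lams t j))
            = ∑ i, ∑ t ∈ Finset.range T, η * (M' i j * (gs t i * lams t j)) := by
              apply Finset.sum_congr rfl; intro i _
              rw [Finset.mul_sum]; apply Finset.sum_congr rfl; intro t _; ring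
          _ = ∑ t ∈ Finset.range T, ∑ i, η * (M' i j * (gs t i * lams t j)) :=
              Finset.sum_comm
          _ = η * ∑ t ∈ Finset.range T, ∑ i, M' i j * (gs t i * lams t j) := by
              rw [Finset.mul_sum]; apply Finset.sum_congr rfl; intro t _
              rw [Finset.mul_sum]
      have h4 : ∑ t ∈ Finset.range T,
            (η * (∑ k, Ms t k j * (gs t k * lams t j)) + η^2 * Bg^2 * (lams t j)^2)
          = η * (∑ t ∈ Finset.range T, ∑ k, Ms t k j * (gs t k * lams t j))
            + η^2 * Bg^2 * ∑ t ∈ Finset.range T, (lams t j)^2 := by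
        rw [Finset.sum_add_distrib, Finset.mul_sum, Finset.mul_sum]
      have h5 : ∑ t ∈ Finset.range T, ∑ i, (M' i j - Ms t i j) * (gs t i * lams t j)
          = (∑ t ∈ Finset.range T, ∑ i, M' i j * (gs t i * lams t j))
            - ∑ t ∈ Finset.range T, ∑ i, Ms t i j * (gs t i * lams t j) := by
        rw [← Finset.sum_sub_distrib]
        apply Finset.sum_congr rfl
        intro t _
        rw [← Finset.sum_sub_distrib]
        apply Finset.sum_congr rfl
        intro i _
        ring
      rw [h5, mul_sub]
      rw [h3, h2, h4] at h1
      linarith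
    -- sum the column bounds
    have hsumcol : η * ∑ t ∈ Finset.range T, D t
        ≤ mt * Real.log mt + η^2 * Bg^2 * ∑ t ∈ Finset.range T, ∑ j, (lams t j)^2 := by
      have hDswap : ∑ t ∈ Finset.range T, D t
          = ∑ j, ∑ t ∈ Finset.range T, ∑ i, (M' i j - Ms t i j) * (gs t i * lams t j) := by
        calc ∑ t ∈ Finset.range T, D t
            = ∑ t ∈ Finset.range T, ∑ j, ∑ i, (M' i j - Ms t i j) * (gs t i * lams t j) := by
              apply Finset.sum_congr rfl
              intro t _
              rw [hD]
              exact Finset.sum_comm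
          _ = ∑ j, ∑ t ∈ Finset.range T, ∑ i, (M' i j - Ms t i j) * (gs t i * lams t j) :=
              Finset.sum_comm
      have hsum := Finset.sum_le_sum (fun j (_ : j ∈ Finset.univ) => hcol j)
      rw [hDswap, Finset.mul_sum]
      calc ∑ j, η * (∑ t ∈ Finset.range T, ∑ i, (M' i j - Ms t i j) * (gs t i * lams t j))
          ≤ ∑ j : Fin mt, (Real.log mt
              + η^2 * Bg^2 * ∑ t ∈ Finset.range T, (lams t j)^2) := hsum
        _ = mt * Real.log mt + η^2 * Bg^2 * ∑ t ∈ Finset.range T, ∑ j, (lams t j)^2 := by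
            rw [Finset.sum_add_distrib, Finset.sum_const, Finset.card_univ, Fintype.card_fin,
              nsmul_eq_mul, ← Finset.mul_sum, Finset.sum_comm]
    -- ∑_t ∑_j λ² ≤ T
    have hlsq : ∑ t ∈ Finset.range T, ∑ j, (lams t j)^2 ≤ T := by
      calc ∑ t ∈ Finset.range T, ∑ j, (lams t j)^2
          ≤ ∑ t ∈ Finset.range T, (1:ℝ) := by
            apply Finset.sum_le_sum
            intro t ht
            have ht' := Finset.mem_range.mp ht
            calc ∑ j, (lams t j)^2 ≤ ∑ j, lams t j := by
                  apply Finset.sum_le_sum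
                  intro j _
                  nlinarith [hl0 t ht' j, hlle1 t ht' j]
              _ = 1 := hl1 t ht'
        _ = T := by simp
    have hS : ∑ t ∈ Finset.range T, D t ≤ mt * Real.log mt / η + η * Bg^2 * T := by
      have h6 : η^2 * Bg^2 * ∑ t ∈ Finset.range T, ∑ j, (lams t j)^2
          ≤ η^2 * Bg^2 * T := mul_le_mul_of_nonneg_left hlsq (by positivity)
      have h7 : η * ∑ t ∈ Finset.range T, D t ≤ mt * Real.log mt + η^2 * Bg^2 * T := by
        linarith
      have h8 : ∑ t ∈ Finset.range T, D t ≤ (mt * Real.log mt + η^2 * Bg^2 * T) / η := by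
        rw [le_div_iff₀ hηpos]
        linarith [h7]
      calc ∑ t ∈ Finset.range T, D t ≤ (mt * Real.log mt + η^2 * Bg^2 * T) / η := h8
        _ = mt * Real.log mt / η + η * Bg^2 * T := by
            field_simp
    -- final arithmetic
    have hfinal : (1 / (T:ℝ)) * ∑ t ∈ Finset.range T, D t
        ≤ 2 * Bg * Real.sqrt ((mt : ℝ) * Real.log mt / T) := by
      obtain ⟨s, hsdef⟩ : ∃ s, s = Real.sqrt ((mt : ℝ) * Real.log mt / T) := ⟨_, rfl⟩
      rw [← hsdef]
      have hqpos : (0:ℝ) < (mt : ℝ) * Real.log mt / T := div_pos hLpos hTR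
      have hspos : 0 < s := by rw [hsdef]; exact Real.sqrt_pos.mpr hqpos
      have hs2 : s^2 = (mt : ℝ) * Real.log mt / T := by rw [hsdef]; exact Real.sq_sqrt hqpos.le
      have hηs : η = s / Bg := by
        rw [hη, show (mt : ℝ) * Real.log mt / (T * Bg ^ 2)
              = ((mt : ℝ) * Real.log mt / T) * (1 / Bg) ^ 2 by field_simp,
          Real.sqrt_mul hqpos.le, Real.sqrt_sq (by positivity), ← hsdef]
        field_simp
      have hL : (mt : ℝ) * Real.log mt = s^2 * T := by
        rw [hs2, div_mul_cancel₀ _ (ne_of_gt hTR)]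
      have hterm : mt * Real.log mt / η + η * Bg^2 * T = 2 * Bg * s * T := by
        rw [hηs, hL]
        field_simp
        ring
      calc (1 / (T:ℝ)) * ∑ t ∈ Finset.range T, D t
          ≤ (1 / (T:ℝ)) * (mt * Real.log mt / η + η * Bg^2 * T) :=
            mul_le_mul_of_nonneg_left hS (by positivity)
        _ = 2 * Bg * s := by
            rw [hterm]
            field_simp
    linarith [hmain, hfinal]
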